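/- arXiv:1501.04287 — 2 statements merged into one kernel-verified Lean document; each statement's English description precedes it below -/
import Mathlib

section
/- Let d ≥ 1, n ≥ 1 and 0 ≤ k < d be integers. Then the number of x ∈ ℤ^d (functions Fin d → ℤ) with ‖x‖₁ = n and exactly k coordinates equal to 0 is C(d, k) · 2^{d−k} · C(n−1, d−k−1), where C denotes the binomial coefficient. -/
open Finset





noncomputable def msE (j : ℕ) : Multiset (Fin j) ≃ (Fin j → ℕ) :=
  (Multiset.toFinsupp (α := Fin j)).toEquiv.trans Finsupp.equivFunOnFinite

lemma msE_sum (j : ℕ) (s : Multiset (Fin j)) : (∑ i, msE j s i) = Multiset.card s := by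
  have h1 : ∀ i, msE j s i = s.count i := fun i => rfl
  simp_rw [h1]
  rw [← Multiset.toFinset_sum_count_eq s]
  exact (Finset.sum_subset (Finset.subset_univ _) (by
    intro x _ hx
    simpa [Multiset.count_eq_zero] using hx)).symm

lemma sb0 (j m : ℕ) (hj : 1 ≤ j) :
    Nat.card {f : Fin j → ℕ // ∑ i, f i = m} = Nat.choose (m + j - 1) (j - 1) := by
  classical
  have e2 : {s : Multiset (Fin j) // Multiset.card s = m} ≃ {f : Fin j → ℕ // ∑ i, f i = m} :=
    Equiv.subtypeEquiv (msE j) (fun s => by rw [← msE_sum j s])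
  have h0 : Nat.card {f : Fin j → ℕ // ∑ i, f i = m} = Nat.card (Sym (Fin j) m) :=
    Nat.card_congr e2.symm
  have h4 : Fintype.card (Sym (Fin j) m) = (j + m - 1).choose m := by
    rw [Sym.card_sym_eq_choose, Fintype.card_fin]
  rw [h0, Nat.card_eq_fintype_card, h4]
  clear h0 h4 e2
  have h2 : j + m - 1 = m + j - 1 := by omega
  have h3 : m ≤ m + j - 1 := by omega
  rw [h2, ← Nat.choose_symm h3]
  congr 1
  omega

lemma sb1 (j n : ℕ) (hj : 1 ≤ j) (hn : 1 ≤ n) :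
    Nat.card {f : Fin j → ℕ // (∀ i, f i ≠ 0) ∧ ∑ i, f i = n}
      = Nat.choose (n - 1) (j - 1) := by
  by_cases hjn : j ≤ n
  · have e : {g : Fin j → ℕ // ∑ i, g i = n - j} ≃
        {f : Fin j → ℕ // (∀ i, f i ≠ 0) ∧ ∑ i, f i = n} :=
      { toFun := fun g => ⟨fun i => g.1 i + 1, fun i => Nat.succ_ne_zero _, by
          show ∑ i, (g.1 i + 1) = n
          rw [Finset.sum_add_distrib, g.2]
          simp
          omega⟩
        invFun := fun f => ⟨fun i => f.1 i - 1, by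
          show ∑ i, (f.1 i - 1) = n - j
          have h1 : ∀ i, f.1 i - 1 + 1 = f.1 i := fun i =>
            Nat.succ_pred_eq_of_pos (Nat.pos_of_ne_zero (f.2.1 i))
          have h2 : ∑ i, (f.1 i - 1 + 1) = n := by simp_rw [h1]; exact f.2.2
          rw [Finset.sum_add_distrib] at h2
          simp at h2
          omega⟩
        left_inv := fun g => by ext i; simp
        right_inv := fun f => by
          ext i
          exact Nat.succ_pred_eq_of_pos (Nat.pos_of_ne_zero (f.2.1 i)) }
    rw [← Nat.card_congr e, sb0 j (n - j) hj]
    congr 1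
    omega
  · have hE : IsEmpty {f : Fin j → ℕ // (∀ i, f i ≠ 0) ∧ ∑ i, f i = n} := by
      constructor
      rintro ⟨f, hf, hs⟩
      have h1 : ∑ _i : Fin j, 1 ≤ ∑ i, f i :=
        Finset.sum_le_sum fun i _ => Nat.pos_of_ne_zero (hf i)
      simp at h1
      omega
    rw [Nat.card_of_isEmpty, Nat.choose_eq_zero_of_lt (by omega)]




/-- sign/abs decomposition -/
noncomputable def eqY (j n : ℕ) :
    {y : Fin j → ℤ // (∀ i, y i ≠ 0) ∧ ∑ i, |y i| = (n : ℤ)} ≃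
      (Fin j → Bool) × {f : Fin j → ℕ // (∀ i, f i ≠ 0) ∧ ∑ i, f i = n} where
  toFun y := ⟨fun i => decide (0 < y.1 i),
    ⟨fun i => (y.1 i).natAbs, fun i => by simpa using y.2.1 i, by
      have h := y.2.2
      have h2 : ((∑ i, (y.1 i).natAbs : ℕ) : ℤ) = (n : ℤ) := by
        rw [Nat.cast_sum]
        simp_rw [Int.natCast_natAbs]
        exact h
      exact_mod_cast h2⟩⟩
  invFun p := ⟨fun i => (if p.1 i then 1 else -1) * (p.2.1 i : ℤ), fun i => by
      have := p.2.2.1 i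
      rcases h : p.1 i with _ | _ <;> simp [h] <;> exact_mod_cast this, by
      have : ∀ i, |(if p.1 i then (1:ℤ) else -1) * (p.2.1 i : ℤ)| = (p.2.1 i : ℤ) := by
        intro i
        rcases h : p.1 i with _ | _ <;> simp [h, abs_of_nonneg]
      simp_rw [this]
      rw [← Nat.cast_sum, p.2.2.2]⟩
  left_inv y := by
    ext i
    rcases lt_trichotomy (y.1 i) 0 with h | h | h
    · simp [not_lt.2 h.le, h.ne, abs_of_neg h, ← Int.abs_eq_natAbs]
    · exact absurd h (y.2.1 i)
    · simp [h, abs_of_pos h, ← Int.abs_eq_natAbs]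
  right_inv p := by
    obtain ⟨s, f, hf, hs⟩ := p
    refine Prod.ext ?_ ?_
    · funext i
      have h1 : 0 < (f i : ℤ) := by exact_mod_cast Nat.pos_of_ne_zero (hf i)
      rcases h : s i with _ | _ <;> simp [h, h1, Nat.pos_of_ne_zero (hf i), not_lt.2 (by omega : -(f i : ℤ) ≤ 0)]
    · ext i
      rcases h : s i with _ | _ <;> simp [h]

/-- fiber of a fixed zero set -/
noncomputable def eqFib (d j : ℕ) (n : ℤ) (S : Finset (Fin d))
    (e : {i // i ∈ Sᶜ} ≃ Fin j) :
    {x : Fin d → ℤ // Finset.univ.filter (fun i => x i = 0) = S ∧ ∑ i, |x i| = n} ≃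
      {y : Fin j → ℤ // (∀ i, y i ≠ 0) ∧ ∑ i, |y i| = n} where
  toFun x := ⟨fun i => x.1 (e.symm i).1, by
      intro i
      have hc := (e.symm i).2
      rw [Finset.mem_compl] at hc
      intro h0
      have hm : (e.symm i).1 ∈ Finset.univ.filter (fun a => x.1 a = 0) :=
        Finset.mem_filter.2 ⟨Finset.mem_univ _, h0⟩
      rw [x.2.1] at hm
      exact hc hm, by
      have h1 : ∑ i : Fin j, |x.1 (e.symm i).1| = ∑ c : {i // i ∈ Sᶜ}, |x.1 c.1| :=
        Fintype.sum_equiv e.symm _ _ (fun i => rfl)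
      rw [h1]
      rw [Finset.sum_coe_sort (Sᶜ) (fun i => |x.1 i|)]
      rw [Finset.sum_subset (Finset.subset_univ Sᶜ) (by
        intro i _ hi
        rw [Finset.mem_compl, not_not] at hi
        have : x.1 i = 0 := by
          have := x.2.1 ▸ hi
          exact (Finset.mem_filter.1 this).2
        simp [this])]
      exact x.2.2⟩
  invFun y := ⟨fun i => if h : i ∈ Sᶜ then y.1 (e ⟨i, h⟩) else 0, by
      ext i
      simp only [Finset.mem_filter, Finset.mem_univ, true_and]
      by_cases h : i ∈ Sᶜ
      · rw [dif_pos h]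
        exact ⟨fun h0 => absurd h0 (y.2.1 _), fun hS => absurd hS (Finset.mem_compl.1 h)⟩
      · rw [dif_neg h]
        rw [Finset.mem_compl, not_not] at h
        exact ⟨fun _ => h, fun _ => rfl⟩, by
      have hzero : ∀ i ∈ Finset.univ, i ∉ Sᶜ →
          |if h : i ∈ Sᶜ then y.1 (e ⟨i, h⟩) else 0| = 0 := by
        intro i _ hi
        rw [dif_neg hi, abs_zero]
      rw [← Finset.sum_subset (Finset.subset_univ Sᶜ) hzero]
      rw [← Finset.sum_coe_sort (Sᶜ) _]
      have h1 : ∑ c : {i // i ∈ Sᶜ}, |if h : c.1 ∈ Sᶜ then y.1 (e ⟨c.1, h⟩) else 0|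
          = ∑ c : {i // i ∈ Sᶜ}, |y.1 (e c)| := by
        apply Fintype.sum_congr
        intro c
        rw [dif_pos c.2]
      rw [h1]
      rw [Fintype.sum_equiv e _ (fun i => |y.1 i|) (fun c => rfl)]
      exact y.2.2⟩
  left_inv x := by
    ext i
    by_cases h : i ∈ Sᶜ
    · simp only [dif_pos h]
      rw [Equiv.symm_apply_apply]
    · simp only [dif_neg h]
      rw [Finset.mem_compl, not_not] at h
      have := x.2.1 ▸ h
      exact ((Finset.mem_filter.1 this).2).symm
  right_inv y := by
    ext i
    have h : ((e.symm i : {i // i ∈ Sᶜ}) : Fin d) ∈ Sᶜ := (e.symm i).2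
    simp only [dif_pos h]
    rw [show (⟨(e.symm i).1, h⟩ : {i // i ∈ Sᶜ}) = e.symm i from Subtype.ext rfl,
      Equiv.apply_symm_apply]

/-- fiber of the zero-set map over a fixed `S` -/
def eqFiber (d k : ℕ) (n : ℤ) (S : {S : Finset (Fin d) // S.card = k}) :
    {a : {x : Fin d → ℤ // (∑ i, |x i|) = n ∧ (Finset.univ.filter fun i => x i = 0).card = k} //
        (⟨Finset.univ.filter (fun i => a.1 i = 0), a.2.2⟩ : {S : Finset (Fin d) // S.card = k}) = S} ≃
      {x : Fin d → ℤ // Finset.univ.filter (fun i => x i = 0) = S.1 ∧ ∑ i, |x i| = n} where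
  toFun a := ⟨a.1.1, congrArg Subtype.val a.2, a.1.2.1⟩
  invFun x := ⟨⟨x.1, x.2.2, by rw [x.2.1]; exact S.2⟩, Subtype.ext x.2.1⟩
  left_inv a := Subtype.ext (Subtype.ext rfl)
  right_inv x := Subtype.ext rfl


/-- The number of points on the ℓ¹-sphere of radius `n ≥ 1` in `ℤ^d` with exactly `k`
vanishing coordinates is `C(d,k)·2^{d-k}·C(n-1, d-k-1)` (Section 7 of the paper). -/
theorem stmt_18 (d n k : ℕ) (hd : 1 ≤ d) (hn : 1 ≤ n) (hk : k < d) :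
    {x : Fin d → ℤ | (∑ i, |x i|) = (n : ℤ) ∧
        (Finset.univ.filter fun i => x i = 0).card = k}.ncard
      = Nat.choose d k * 2 ^ (d - k) * Nat.choose (n - 1) (d - k - 1) := by
  have hj : 1 ≤ d - k := by omega
  rw [← Nat.card_coe_set_eq]
  have eS : ∀ S : {S : Finset (Fin d) // S.card = k},
      {i // i ∈ (S.1)ᶜ} ≃ Fin (d - k) := fun S =>
    Finset.equivFinOfCardEq (by rw [Finset.card_compl, S.2, Fintype.card_fin])
  let f : {x : Fin d → ℤ // (∑ i, |x i|) = (n : ℤ) ∧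
      (Finset.univ.filter fun i => x i = 0).card = k} → {S : Finset (Fin d) // S.card = k} :=
    fun a => ⟨Finset.univ.filter (fun i => a.1 i = 0), a.2.2⟩
  have E : {x : Fin d → ℤ // (∑ i, |x i|) = (n : ℤ) ∧
        (Finset.univ.filter fun i => x i = 0).card = k} ≃
      {S : Finset (Fin d) // S.card = k} ×
        ((Fin (d - k) → Bool) × {g : Fin (d - k) → ℕ // (∀ i, g i ≠ 0) ∧ ∑ i, g i = n}) :=
    ((Equiv.sigmaFiberEquiv f).symm.trans
      (Equiv.sigmaCongrRight (fun S =>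
        (eqFiber d k (n : ℤ) S).trans ((eqFib d (d - k) (n : ℤ) S.1 (eS S)).trans
          (eqY (d - k) n))))).trans
      (Equiv.sigmaEquivProd _ _)
  have hcard : Nat.card {x : Fin d → ℤ // (∑ i, |x i|) = (n : ℤ) ∧
        (Finset.univ.filter fun i => x i = 0).card = k}
      = Nat.card ({S : Finset (Fin d) // S.card = k} ×
        ((Fin (d - k) → Bool) × {g : Fin (d - k) → ℕ // (∀ i, g i ≠ 0) ∧ ∑ i, g i = n})) :=
    Nat.card_congr E
  show Nat.card {x : Fin d → ℤ // (∑ i, |x i|) = (n : ℤ) ∧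
      (Finset.univ.filter fun i => x i = 0).card = k}
    = Nat.choose d k * 2 ^ (d - k) * Nat.choose (n - 1) (d - k - 1)
  rw [hcard, Nat.card_prod, Nat.card_prod]
  have h1 : Nat.card {S : Finset (Fin d) // S.card = k} = Nat.choose d k := by
    rw [Nat.card_eq_fintype_card, Fintype.card_finset_len, Fintype.card_fin]
  have h2 : Nat.card (Fin (d - k) → Bool) = 2 ^ (d - k) := by
    rw [Nat.card_eq_fintype_card]
    simp
  rw [h1, h2, sb1 (d - k) n hj hn, mul_assoc]
end

section
/- Let d ≥ 1. For n ∈ ℕ let s_n := #{x ∈ ℤ^d : ‖x‖₁ = n} and let α_n := #{(x, y) ∈ ℤ^d × ℤ^d : ‖x‖₁ = n, ‖y‖₁ = n+1, ‖x − y‖₁ = 1} be the number of edges between consecutive ℓ¹-spheres. Then there exists a constant C > 0 such that for every n ≥ 1: | α_n / √(s_n · s_{n+1}) − d | ≤ C / n². -/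
set_option maxHeartbeats 1000000

open Finset

namespace Stmt19



/-- the ℓ¹ sphere of radius n in ℤ^k, as a Finset -/
noncomputable def sph (k n : ℕ) : Finset (Fin k → ℤ) :=
  (Finset.Icc (fun _ => -(n:ℤ)) (fun _ => (n:ℤ))).filter fun x => (∑ i, |x i|) = (n:ℤ)

lemma mem_sph {k n : ℕ} {x : Fin k → ℤ} : x ∈ sph k n ↔ (∑ i, |x i|) = (n:ℤ) := by
  simp only [sph, Finset.mem_filter, Finset.mem_Icc, and_iff_right_iff_imp, Pi.le_def]
  intro h
  have habs : ∀ i, |x i| ≤ (n:ℤ) := by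
    intro i
    calc |x i| ≤ ∑ j, |x j| := Finset.single_le_sum (fun j _ => abs_nonneg (x j)) (mem_univ i)
    _ = n := h
  exact ⟨fun i => neg_le_of_abs_le (habs i), fun i => le_of_abs_le (habs i)⟩

/-- unique step: if the ℓ¹ distance is 1, the points differ in exactly one coord by 1 -/
lemma step_exists {k : ℕ} {x y : Fin k → ℤ} (h : (∑ i, |x i - y i|) = 1) :
    ∃ i, |x i - y i| = 1 ∧ ∀ j, j ≠ i → x j = y j := by
  have hnn : ∀ j ∈ Finset.univ, (0:ℤ) ≤ |x j - y j| := fun j _ => abs_nonneg _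
  obtain ⟨i, -, hi⟩ : ∃ i ∈ Finset.univ, x i - y i ≠ 0 := by
    by_contra hall
    push_neg at hall
    rw [Finset.sum_eq_zero (fun j _ => by rw [hall j (mem_univ j)]; simp)] at h
    norm_num at h
  have h1 : (1:ℤ) ≤ |x i - y i| := by
    have := abs_pos.mpr hi
    omega
  have hsplit : |x i - y i| + ∑ j ∈ Finset.univ.erase i, |x j - y j| = 1 := by
    have := Finset.add_sum_erase Finset.univ (fun j => |x j - y j|) (mem_univ i)
    rw [this]; exact h
  have hrest : ∑ j ∈ Finset.univ.erase i, |x j - y j| = 0 := by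
    have : (0:ℤ) ≤ ∑ j ∈ Finset.univ.erase i, |x j - y j| :=
      Finset.sum_nonneg (fun j _ => abs_nonneg _)
    omega
  refine ⟨i, by omega, fun j hj => ?_⟩
  have := (Finset.sum_eq_zero_iff_of_nonneg (fun j _ => abs_nonneg (x j - y j))).mp hrest j
    (Finset.mem_erase.mpr ⟨hj, mem_univ j⟩)
  have := abs_eq_zero.mp this
  omega




def stepv (b : Bool) : ℤ := if b then 1 else -1

lemma stepv_ne (b : Bool) : stepv b ≠ 0 := by cases b <;> simp [stepv]

def mv (x : Fin k → ℤ) (p : Fin k × Bool) : Fin k → ℤ :=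
  Function.update x p.1 (x p.1 + stepv p.2)

lemma mv_sum (x : Fin k → ℤ) (p : Fin k × Bool) :
    (∑ i, |mv x p i|) = (∑ i, |x i|) + (|x p.1 + stepv p.2| - |x p.1|) := by
  obtain ⟨j, b⟩ := p
  have h1 : (fun i => |mv x (j, b) i|) = Function.update (fun i => |x i|) j (|x j + stepv b|) := by
    funext i
    by_cases hij : i = j
    · subst hij; simp [mv]
    · simp [mv, Function.update_of_ne hij]
  calc (∑ i, |mv x (j, b) i|) = ∑ i, Function.update (fun i => |x i|) j (|x j + stepv b|) i := by
        rw [← h1]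
    _ = |x j + stepv b| + ∑ i ∈ Finset.univ.erase j, |x i| := by
        rw [Finset.sum_update_of_mem (mem_univ j), Finset.erase_eq]
    _ = (∑ i, |x i|) + (|x j + stepv b| - |x j|) := by
        have := Finset.add_sum_erase Finset.univ (fun i => |x i|) (mem_univ j)
        linarith

lemma mv_dist (x : Fin k → ℤ) (p : Fin k × Bool) :
    (∑ i, |x i - mv x p i|) = 1 := by
  obtain ⟨j, b⟩ := p
  have h1 : (fun i => |x i - mv x (j, b) i|) = Function.update (fun _ => (0:ℤ)) j 1 := by
    funext i
    by_cases hij : i = j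
    · subst hij; simp only [mv, Function.update_self]
      cases b <;> simp [stepv]
    · simp [mv, Function.update_of_ne hij]
  calc (∑ i, |x i - mv x (j, b) i|) = ∑ i, Function.update (fun _ => (0:ℤ)) j 1 i := by rw [← h1]
    _ = 1 := by rw [Finset.sum_update_of_mem (mem_univ j)]; simp

lemma mv_inj (x : Fin k → ℤ) : Function.Injective (mv x) := by
  rintro ⟨j, b⟩ ⟨j', b'⟩ h
  have hj : j = j' := by
    by_contra hne
    have h1 : mv x (j, b) j = x j + stepv b := by simp [mv]
    have h2 : mv x (j', b') j = x j := by simp [mv, Function.update_of_ne hne]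
    rw [h] at h1
    rw [h1] at h2
    exact stepv_ne b (by linarith)
  subst hj
  have h1 : mv x (j, b) j = x j + stepv b := by simp [mv]
  have h2 : mv x (j, b') j = x j + stepv b' := by simp [mv]
  rw [h] at h1
  rw [h1] at h2
  have : stepv b = stepv b' := by linarith
  cases b <;> cases b' <;> simp_all [stepv]

lemma fiber_core (k m : ℕ) (x : Fin k → ℤ) :
    ((sph k m).filter fun y => (∑ i, |x i - y i|) = 1).card
      = (Finset.univ.filter (fun p : Fin k × Bool =>
          (∑ i, |x i|) + (|x p.1 + stepv p.2| - |x p.1|) = (m:ℤ))).card := by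
  rw [← Finset.card_image_of_injective _ (mv_inj x)]
  congr 1
  ext y
  constructor
  swap
  · intro hy
    obtain ⟨p, hp, rfl⟩ := Finset.mem_image.mp hy
    have hp' := (Finset.mem_filter.mp hp).2
    refine Finset.mem_filter.mpr ⟨mem_sph.mpr ?_, mv_dist x p⟩
    rw [mv_sum]; exact hp'
  · intro hy
    obtain ⟨hm, hdist⟩ := Finset.mem_filter.mp hy
    have hysum := mem_sph.mp hm
    obtain ⟨i, h1, hrest⟩ := step_exists hdist
    have habs : x i - y i = 1 ∨ x i - y i = -1 := by
      rcases abs_cases (x i - y i) with ⟨e, _⟩ | ⟨e, _⟩ <;> omega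
    have key : ∀ b : Bool, y i = x i + stepv b → y = mv x (i, b) := by
      intro b hb
      funext j
      by_cases hij : j = i
      · subst hij; simp [mv, hb]
      · simp [mv, Function.update_of_ne hij, (hrest j hij).symm]
    have main : ∀ b : Bool, y i = x i + stepv b →
        y ∈ (Finset.univ.filter (fun p : Fin k × Bool =>
          (∑ i, |x i|) + (|x p.1 + stepv p.2| - |x p.1|) = (m:ℤ))).image (mv x) := by
      intro b hb
      refine Finset.mem_image.mpr ⟨(i, b), Finset.mem_filter.mpr ⟨mem_univ _, ?_⟩, (key b hb).symm⟩
      have := mv_sum x (i, b)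
      rw [← key b hb] at this
      rw [← this, hysum]
    rcases habs with e | e
    · exact main false (by simp [stepv]; omega)
    · exact main true (by simp [stepv]; omega)



lemma cntA (v : ℤ) : (if |v + stepv true| = |v| + 1 then (1:ℕ) else 0)
    + (if |v + stepv false| = |v| + 1 then 1 else 0) = 1 + (if v = 0 then 1 else 0) := by
  have ht : stepv true = 1 := rfl
  have hf : stepv false = -1 := rfl
  rw [ht, hf]
  rcases abs_cases v with ⟨e1,_⟩|⟨e1,_⟩ <;> rcases abs_cases (v+1) with ⟨e2,_⟩|⟨e2,_⟩ <;>
    rcases abs_cases (v+-1) with ⟨e3,_⟩|⟨e3,_⟩ <;> split_ifs <;> omega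

lemma cntB (v : ℤ) : (if |v + stepv true| + 1 = |v| then (1:ℕ) else 0)
    + (if |v + stepv false| + 1 = |v| then 1 else 0) = (if v = 0 then 0 else 1) := by
  have ht : stepv true = 1 := rfl
  have hf : stepv false = -1 := rfl
  rw [ht, hf]
  rcases abs_cases v with ⟨e1,_⟩|⟨e1,_⟩ <;> rcases abs_cases (v+1) with ⟨e2,_⟩|⟨e2,_⟩ <;>
    rcases abs_cases (v+-1) with ⟨e3,_⟩|⟨e3,_⟩ <;> split_ifs <;> omega

lemma countA {k n : ℕ} (x : Fin k → ℤ) (hx : (∑ i, |x i|) = (n:ℤ)) :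
    ((sph k (n+1)).filter fun y => (∑ i, |x i - y i|) = 1).card
      = k + (Finset.univ.filter fun i => x i = 0).card := by
  rw [fiber_core k (n+1) x, Finset.card_filter, Fintype.sum_prod_type]
  have hc : ∀ i (w : ℤ), ((∑ j, |x j|) + (w - |x i|) = ((n+1:ℕ):ℤ)) ↔ (w = |x i| + 1) := by
    intro i w; rw [hx]; push_cast; constructor <;> intro <;> omega
  calc (∑ i : Fin k, ∑ b : Bool,
        if (∑ j, |x j|) + (|x i + stepv b| - |x i|) = ((n+1:ℕ):ℤ) then 1 else 0)
      = ∑ i : Fin k, (1 + if x i = 0 then 1 else 0) := by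
        refine Finset.sum_congr rfl fun i _ => ?_
        rw [Fintype.sum_bool]
        simp only [hc i]
        exact cntA (x i)
    _ = k + (Finset.univ.filter fun i => x i = 0).card := by
        rw [Finset.sum_add_distrib, Finset.sum_const, card_univ, Fintype.card_fin, smul_eq_mul,
          mul_one, ← Finset.card_filter]

lemma countB {k n : ℕ} (y : Fin k → ℤ) (hy : (∑ i, |y i|) = (n:ℤ) + 1) :
    ((sph k n).filter fun x => (∑ i, |y i - x i|) = 1).card
      = (Finset.univ.filter fun i => y i ≠ 0).card := by
  rw [fiber_core k n y, Finset.card_filter, Fintype.sum_prod_type]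
  have hc : ∀ i (w : ℤ), ((∑ j, |y j|) + (w - |y i|) = ((n:ℕ):ℤ)) ↔ (w + 1 = |y i|) := by
    intro i w; rw [hy]; constructor <;> intro <;> omega
  calc (∑ i : Fin k, ∑ b : Bool,
        if (∑ j, |y j|) + (|y i + stepv b| - |y i|) = ((n:ℕ):ℤ) then 1 else 0)
      = ∑ i : Fin k, (if y i = 0 then 0 else 1) := by
        refine Finset.sum_congr rfl fun i _ => ?_
        rw [Fintype.sum_bool]
        simp only [hc i]
        exact cntB (y i)
    _ = (Finset.univ.filter fun i => y i ≠ 0).card := by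
        rw [Finset.card_filter]
        refine Finset.sum_congr rfl fun i _ => ?_
        by_cases h : y i = 0 <;> simp [h]



noncomputable def edg (k n : ℕ) : Finset ((Fin k → ℤ) × (Fin k → ℤ)) :=
  ((sph k n) ×ˢ (sph k (n+1))).filter fun p => (∑ i, |p.1 i - p.2 i|) = 1

noncomputable def NN (k n : ℕ) : ℕ := (sph k n).card
noncomputable def ZZ (k n : ℕ) : ℕ := ∑ x ∈ sph k n, (Finset.univ.filter fun i => x i = 0).card

lemma edg_card1 (k n : ℕ) : (edg k n).card = k * NN k n + ZZ k n := by
  have hmap : ∀ p ∈ edg k n, Prod.fst p ∈ sph k n := by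
    intro p hp
    exact (Finset.mem_product.mp (Finset.mem_filter.mp hp).1).1
  rw [Finset.card_eq_sum_card_fiberwise hmap]
  have hfib : ∀ x ∈ sph k n, ((edg k n).filter fun p => p.1 = x).card
      = k + (Finset.univ.filter fun i => x i = 0).card := by
    intro x hx
    have himg : ((edg k n).filter fun p => p.1 = x)
        = ((sph k (n+1)).filter fun y => (∑ i, |x i - y i|) = 1).image (fun y => (x, y)) := by
      ext ⟨a, b⟩
      simp only [Finset.mem_filter, Finset.mem_image, edg, Finset.mem_product, Prod.mk.injEq]
      constructor
      · rintro ⟨⟨⟨h1, h2⟩, h3⟩, rfl⟩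
        exact ⟨b, ⟨h2, h3⟩, rfl, rfl⟩
      · rintro ⟨y, ⟨hy1, hy2⟩, rfl, rfl⟩
        exact ⟨⟨⟨hx, hy1⟩, hy2⟩, rfl⟩
    rw [himg, Finset.card_image_of_injective _ (fun a b h => congrArg Prod.snd h),
      countA x (mem_sph.mp hx)]
  rw [Finset.sum_congr rfl hfib, Finset.sum_add_distrib, Finset.sum_const, smul_eq_mul,
    mul_comm]
  rfl

lemma edg_card2 (k n : ℕ) : (edg k n).card + ZZ k (n+1) = k * NN k (n+1) := by
  have hmap : ∀ p ∈ edg k n, Prod.snd p ∈ sph k (n+1) := by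
    intro p hp
    exact (Finset.mem_product.mp (Finset.mem_filter.mp hp).1).2
  rw [Finset.card_eq_sum_card_fiberwise hmap]
  have hfib : ∀ y ∈ sph k (n+1), ((edg k n).filter fun p => p.2 = y).card
      = (Finset.univ.filter fun i => y i ≠ 0).card := by
    intro y hy
    have himg : ((edg k n).filter fun p => p.2 = y)
        = ((sph k n).filter fun x => (∑ i, |y i - x i|) = 1).image (fun x => (x, y)) := by
      ext ⟨a, b⟩
      simp only [Finset.mem_filter, Finset.mem_image, edg, Finset.mem_product, Prod.mk.injEq]
      constructor
      · rintro ⟨⟨⟨h1, h2⟩, h3⟩, rfl⟩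
        refine ⟨a, ⟨h1, ?_⟩, rfl, rfl⟩
        rw [← h3]
        exact Finset.sum_congr rfl fun i _ => abs_sub_comm _ _
      · rintro ⟨z, ⟨hz1, hz2⟩, rfl, rfl⟩
        refine ⟨⟨⟨hz1, hy⟩, ?_⟩, rfl⟩
        rw [← hz2]
        exact Finset.sum_congr rfl fun i _ => abs_sub_comm _ _
    rw [himg, Finset.card_image_of_injective _ (fun a b h => congrArg Prod.fst h)]
    have hsum : (∑ i, |y i|) = (n:ℤ) + 1 := by
      have := mem_sph.mp hy
      push_cast at this
      linarith
    exact countB y hsum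
  rw [Finset.sum_congr rfl hfib]
  have : ∀ y ∈ sph k (n+1), (Finset.univ.filter fun i => y i ≠ 0).card
      + (Finset.univ.filter fun i => y i = 0).card = k := by
    intro y _
    rw [add_comm]
    have := Finset.card_filter_add_card_filter_not (s := Finset.univ)
      (p := fun i : Fin k => y i = 0)
    simpa using this
  calc (∑ y ∈ sph k (n+1), (Finset.univ.filter fun i => y i ≠ 0).card) + ZZ k (n+1)
      = ∑ y ∈ sph k (n+1), ((Finset.univ.filter fun i => y i ≠ 0).card
        + (Finset.univ.filter fun i => y i = 0).card) := by
        rw [Finset.sum_add_distrib]; rfl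
    _ = ∑ _y ∈ sph k (n+1), k := Finset.sum_congr rfl this
    _ = k * NN k (n+1) := by rw [Finset.sum_const, smul_eq_mul, mul_comm]; rfl



lemma NN_zero {n : ℕ} (hn : 1 ≤ n) : NN 0 n = 0 := by
  rw [NN, Finset.card_eq_zero]
  ext x
  simp only [Finset.notMem_empty, iff_false, mem_sph]
  intro h
  simp only [Finset.univ_eq_empty, Finset.sum_empty] at h
  omega

lemma slice_card (k n : ℕ) (i : Fin (k+1)) :
    ((sph (k+1) n).filter fun x => x i = 0).card = NN k n := by
  have hinj : Function.Injective (fun z : Fin k → ℤ => Fin.insertNth (α := fun _ => ℤ) i 0 z) := by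
    intro z z' h
    funext j
    have := congrFun h (i.succAbove j)
    simpa [Fin.insertNth_apply_succAbove] using this
  have himg : (sph k n).image (fun z : Fin k → ℤ => Fin.insertNth (α := fun _ => ℤ) i 0 z)
      = (sph (k+1) n).filter fun x => x i = 0 := by
    ext x
    simp only [Finset.mem_image, Finset.mem_filter, mem_sph]
    constructor
    · rintro ⟨z, hz, rfl⟩
      refine ⟨?_, Fin.insertNth_apply_same (α := fun _ => ℤ) i 0 z⟩
      rw [Fin.sum_univ_succAbove (fun j => |i.insertNth 0 z j|) i]
      simp only [Fin.insertNth_apply_same, Fin.insertNth_apply_succAbove, abs_zero, zero_add]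
      exact hz
    · rintro ⟨hx, hxi⟩
      refine ⟨fun j => x (i.succAbove j), ?_, ?_⟩
      · rw [Fin.sum_univ_succAbove (fun j => |x j|) i, hxi] at hx
        simpa using hx
      · funext j
        rcases eq_or_ne j i with rfl | hne
        · rw [Fin.insertNth_apply_same (α := fun _ => ℤ), hxi]
        · obtain ⟨j', rfl⟩ := Fin.exists_succAbove_eq hne
          rw [Fin.insertNth_apply_succAbove (α := fun _ => ℤ)]
  rw [← himg, Finset.card_image_of_injective _ hinj]
  rfl

lemma ZZ_succ (k n : ℕ) : ZZ (k+1) n = (k+1) * NN k n := by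
  rw [ZZ]
  have : ∀ x ∈ sph (k+1) n, (Finset.univ.filter fun i => x i = 0).card
      = ∑ i : Fin (k+1), if x i = 0 then 1 else 0 := fun x _ => Finset.card_filter _ _
  rw [Finset.sum_congr rfl this, Finset.sum_comm]
  have : ∀ i : Fin (k+1), (∑ x ∈ sph (k+1) n, if x i = 0 then 1 else 0) = NN k n := by
    intro i
    rw [← Finset.card_filter, slice_card]
  rw [Finset.sum_congr rfl (fun i _ => this i), Finset.sum_const, card_univ, Fintype.card_fin, smul_eq_mul]

lemma NN_upper (k m : ℕ) : NN (k+1) m ≤ 2 * (2 * m + 1) ^ k := by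
  classical
  have := Finset.card_le_card_of_injOn
    (f := fun x : Fin (k+1) → ℤ => (Fin.init x, decide (0 ≤ x (Fin.last k))))
    (s := sph (k+1) m)
    (t := (Finset.Icc (fun _ : Fin k => -(m:ℤ)) (fun _ => (m:ℤ))) ×ˢ Finset.univ)
    ?maps ?inj
  · calc NN (k+1) m ≤ _ := this
      _ = 2 * (2 * m + 1) ^ k := by
        rw [Finset.card_product, Pi.card_Icc]
        simp only [Int.card_Icc, Finset.prod_const, Finset.card_univ, Fintype.card_fin,
          Fintype.card_bool]
        have h3 : ((m:ℤ) + 1 - -(m:ℤ)).toNat = 2 * m + 1 := by omega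
        rw [h3, mul_comm]
  case maps =>
    intro x hx
    have hs := mem_sph.mp hx
    have habs : ∀ j, |x j| ≤ (m:ℤ) := by
      intro j
      calc |x j| ≤ ∑ l, |x l| := Finset.single_le_sum (fun l _ => abs_nonneg (x l)) (mem_univ j)
        _ = m := hs
    refine Finset.mem_product.mpr ⟨Finset.mem_Icc.mpr ⟨?_, ?_⟩, Finset.mem_univ _⟩
    · intro j; exact neg_le_of_abs_le (habs _)
    · intro j; exact le_of_abs_le (habs _)
  case inj =>
    intro x hx x' hx' h
    have h1 : Fin.init x = Fin.init x' := congrArg Prod.fst h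
    have h2 : decide (0 ≤ x (Fin.last k)) = decide (0 ≤ x' (Fin.last k)) := congrArg Prod.snd h
    have hs := mem_sph.mp hx
    have hs' := mem_sph.mp hx'
    rw [Fin.sum_univ_castSucc] at hs hs'
    have hinit : ∑ j : Fin k, |x (Fin.castSucc j)| = ∑ j : Fin k, |x' (Fin.castSucc j)| := by
      refine Finset.sum_congr rfl fun j _ => ?_
      have := congrFun h1 j
      simp only [Fin.init] at this
      rw [this]
    have habs : |x (Fin.last k)| = |x' (Fin.last k)| := by linarith
    have h2' : (0 ≤ x (Fin.last k)) ↔ (0 ≤ x' (Fin.last k)) := decide_eq_decide.mp h2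
    have hlast : x (Fin.last k) = x' (Fin.last k) := by
      rcases abs_cases (x (Fin.last k)) with ⟨e1, f1⟩ | ⟨e1, f1⟩ <;>
        rcases abs_cases (x' (Fin.last k)) with ⟨e2, f2⟩ | ⟨e2, f2⟩
      · omega
      · exact absurd (h2'.mp f1) (not_le.mpr f2)
      · exact absurd (h2'.mpr f2) (not_le.mpr f1)
      · omega
    funext j
    induction j using Fin.lastCases with
    | last => exact hlast
    | cast j => simpa [Fin.init] using congrFun h1 j



lemma NN_lower (e n : ℕ) : (n / (e+1) + 1) ^ e ≤ NN (e+1) n := by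
  classical
  set m := n / (e+1) with hm
  have hem : (e+1) * m ≤ n := by
    rw [hm, mul_comm]; exact Nat.div_mul_le_self n (e+1)
  have key := Finset.card_le_card_of_injOn
    (f := fun z : Fin e → ℤ => Fin.snoc z ((n:ℤ) - ∑ j, z j))
    (s := Finset.Icc (fun _ : Fin e => (0:ℤ)) (fun _ => (m:ℤ)))
    (t := sph (e+1) n) ?maps ?inj
  · calc (m+1)^e = (Finset.Icc (fun _ : Fin e => (0:ℤ)) (fun _ => (m:ℤ))).card := by
          rw [Pi.card_Icc]
          simp only [Int.card_Icc]
          have h2 : ∀ a : ℕ, ((a:ℤ) + 1 - 0).toNat = a + 1 := fun a => by omega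
          rw [h2 m, Finset.prod_const, card_univ, Fintype.card_fin]
      _ ≤ NN (e+1) n := key
  case maps =>
    intro z hz
    rw [Finset.mem_coe, Finset.mem_Icc, Pi.le_def, Pi.le_def] at hz
    obtain ⟨hz0, hzm⟩ := hz
    have hsum_le : (∑ j, z j) ≤ (n:ℤ) := by
      calc (∑ j, z j) ≤ ∑ _j : Fin e, (m:ℤ) := Finset.sum_le_sum (fun j _ => hzm j)
        _ = e * m := by rw [Finset.sum_const, card_univ, Fintype.card_fin]; push_cast; ring
        _ ≤ n := by push_cast at hem ⊢; linarith
    have hsum_nn : 0 ≤ ∑ j, z j := Finset.sum_nonneg (fun j _ => hz0 j)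
    rw [Finset.mem_coe, mem_sph, Fin.sum_univ_castSucc]
    have h1 : ∀ j : Fin e, |Fin.snoc (α := fun _ => ℤ) z ((n:ℤ) - ∑ j, z j) (Fin.castSucc j)| = z j := by
      intro j
      rw [Fin.snoc_castSucc]
      exact abs_of_nonneg (hz0 j)
    rw [Finset.sum_congr rfl (fun j _ => h1 j)]
    simp only [Fin.snoc_last]
    rw [abs_of_nonneg (by linarith : (0:ℤ) ≤ (n:ℤ) - ∑ j, z j)]
    ring
  case inj =>
    intro z _ z' _ h
    have := congrArg Fin.init h
    simpa [Fin.init_snoc] using this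



lemma edg_formula (e n : ℕ) :
    (edg (e+1) n).card = (e+1) * (NN (e+1) n + NN e n) := by
  rw [edg_card1, ZZ_succ, Nat.mul_add]

lemma NN_succ_eq (e n : ℕ) :
    NN (e+1) (n+1) = NN (e+1) n + NN e n + NN e (n+1) := by
  have h := edg_card2 (e+1) n
  rw [edg_formula, ZZ_succ] at h
  have h2 : (e+1) * (NN (e+1) n + NN e n + NN e (n+1)) = (e+1) * NN (e+1) (n+1) := by
    rw [← h]; ring
  exact (Nat.eq_of_mul_eq_mul_left (by omega) h2).symm

lemma L1 (e n : ℕ) (hn : 1 ≤ n) : n * NN e n ≤ 2 * 3 ^ e * n ^ e := by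
  cases e with
  | zero => rw [NN_zero hn]; simp
  | succ f =>
    calc n * NN (f+1) n ≤ n * (2 * (2*n+1)^f) := Nat.mul_le_mul_left n (NN_upper f n)
      _ ≤ n * (2 * (3*n)^f) := by
          refine Nat.mul_le_mul_left n (Nat.mul_le_mul_left 2 (Nat.pow_le_pow_left ?_ f))
          omega
      _ = 2 * 3^f * n^(f+1) := by rw [mul_pow]; ring
      _ ≤ 2 * 3^(f+1) * n^(f+1) := by
          refine Nat.mul_le_mul_right _ ?_
          have : (3:ℕ)^f ≤ 3^(f+1) := Nat.pow_le_pow_right (by norm_num) (by omega)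
          omega

lemma L1n (e n : ℕ) (hn : 1 ≤ n) : n * NN e (n+1) ≤ 2 * 5 ^ e * n ^ e := by
  cases e with
  | zero => rw [NN_zero (by omega)]; simp
  | succ f =>
    calc n * NN (f+1) (n+1) ≤ n * (2 * (2*(n+1)+1)^f) :=
          Nat.mul_le_mul_left n (NN_upper f (n+1))
      _ ≤ n * (2 * (5*n)^f) := by
          refine Nat.mul_le_mul_left n (Nat.mul_le_mul_left 2 (Nat.pow_le_pow_left ?_ f))
          omega
      _ = 2 * 5^f * n^(f+1) := by rw [mul_pow]; ring
      _ ≤ 2 * 5^(f+1) * n^(f+1) := by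
          refine Nat.mul_le_mul_right _ ?_
          have : (5:ℕ)^f ≤ 5^(f+1) := Nat.pow_le_pow_right (by norm_num) (by omega)
          omega

lemma key_nat (e n : ℕ) (hn : 1 ≤ n) :
    ∃ D : ℕ, NN e (n+1) = NN e n + D ∧ n^2 * D ≤ 4 * 5^e * n^e := by
  cases e with
  | zero => exact ⟨0, by rw [NN_zero hn, NN_zero (by omega : 1 ≤ n+1)], by simp⟩
  | succ f =>
    refine ⟨NN f n + NN f (n+1), by rw [NN_succ_eq]; ring, ?_⟩
    have b1 : n^2 * NN f n ≤ 2 * 3^f * n^(f+1) := by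
      calc n^2 * NN f n = n * (n * NN f n) := by ring
        _ ≤ n * (2 * 3^f * n^f) := Nat.mul_le_mul_left n (L1 f n hn)
        _ = 2 * 3^f * n^(f+1) := by ring
    have b2 : n^2 * NN f (n+1) ≤ 2 * 5^f * n^(f+1) := by
      calc n^2 * NN f (n+1) = n * (n * NN f (n+1)) := by ring
        _ ≤ n * (2 * 5^f * n^f) := Nat.mul_le_mul_left n (L1n f n hn)
        _ = 2 * 5^f * n^(f+1) := by ring
    have b3 : (3:ℕ)^f ≤ 5^f := Nat.pow_le_pow_left (by norm_num) f
    have b4 : (5:ℕ)^f ≤ 5^(f+1) := Nat.pow_le_pow_right (by norm_num) (by omega)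
    calc n^2 * (NN f n + NN f (n+1)) = n^2 * NN f n + n^2 * NN f (n+1) := by ring
      _ ≤ 2 * 3^f * n^(f+1) + 2 * 5^f * n^(f+1) := Nat.add_le_add b1 b2
      _ = (2 * 3^f + 2 * 5^f) * n^(f+1) := by ring
      _ ≤ (4 * 5^(f+1)) * n^(f+1) := Nat.mul_le_mul_right _ (by omega)

lemma L3 (e n : ℕ) : n^e ≤ (e+1)^e * NN (e+1) n := by
  have h1 : n ≤ (e+1) * (n/(e+1) + 1) := by
    have h0 := Nat.div_add_mod n (e+1)
    have h1' : n % (e+1) < e+1 := Nat.mod_lt _ (by omega)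
    calc n = (e+1)*(n/(e+1)) + n%(e+1) := h0.symm
      _ ≤ (e+1)*(n/(e+1)) + (e+1) := Nat.add_le_add_left (Nat.le_of_lt h1') _
      _ = (e+1)*(n/(e+1)+1) := by ring
  calc n^e ≤ ((e+1) * (n/(e+1) + 1))^e := Nat.pow_le_pow_left h1 e
    _ = (e+1)^e * (n/(e+1) + 1)^e := mul_pow _ _ _
    _ ≤ (e+1)^e * NN (e+1) n := Nat.mul_le_mul_left _ (NN_lower e n)

lemma NN_pos (e n : ℕ) : 1 ≤ NN (e+1) n := by
  have := NN_lower e n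
  have h2 : 1 ≤ (n/(e+1) + 1)^e := Nat.one_le_pow _ _ (Nat.succ_pos _)
  exact le_trans h2 this

lemma sph_set_eq (k n : ℕ) :
    {x : Fin k → ℤ | (∑ i, |x i|) = (n : ℤ)}.ncard = NN k n := by
  rw [show {x : Fin k → ℤ | (∑ i, |x i|) = (n : ℤ)} = ↑(sph k n) by
    ext x; simp [mem_sph]]
  rw [Set.ncard_coe_finset]
  rfl

lemma edg_set_eq (k n : ℕ) :
    {p : (Fin k → ℤ) × (Fin k → ℤ) |
        (∑ i, |p.1 i|) = (n : ℤ) ∧ (∑ i, |p.2 i|) = (n : ℤ) + 1 ∧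
        (∑ i, |p.1 i - p.2 i|) = 1}.ncard = (edg k n).card := by
  rw [show {p : (Fin k → ℤ) × (Fin k → ℤ) |
        (∑ i, |p.1 i|) = (n : ℤ) ∧ (∑ i, |p.2 i|) = (n : ℤ) + 1 ∧
        (∑ i, |p.1 i - p.2 i|) = 1} = ↑(edg k n) by
    ext ⟨a, b⟩
    simp only [Set.mem_setOf_eq, Finset.coe_filter, edg, Finset.mem_coe, Finset.mem_filter,
      Finset.mem_product, mem_sph]
    push_cast
    tauto]
  rw [Set.ncard_coe_finset]


end Stmt19

open Stmt19 in
/-- The normalized edge counts between consecutive ℓ¹-spheres in `ℤ^d` satisfy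
`|α_n/√(s_n s_{n+1}) - d| ≤ C/n²` (Section 7 of the paper). -/
theorem stmt_19 (d : ℕ) (hd : 1 ≤ d)
    (s : ℕ → ℕ)
    (hsdef : ∀ n : ℕ, s n = {x : Fin d → ℤ | (∑ i, |x i|) = (n : ℤ)}.ncard)
    (αe : ℕ → ℕ)
    (hαdef : ∀ n : ℕ, αe n = {p : (Fin d → ℤ) × (Fin d → ℤ) |
        (∑ i, |p.1 i|) = (n : ℤ) ∧ (∑ i, |p.2 i|) = (n : ℤ) + 1 ∧
        (∑ i, |p.1 i - p.2 i|) = 1}.ncard) :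
    ∃ C : ℝ, 0 < C ∧ ∀ n : ℕ, 1 ≤ n →
      |(αe n : ℝ) / Real.sqrt ((s n : ℝ) * (s (n + 1) : ℝ)) - (d : ℝ)|
        ≤ C / (n : ℝ) ^ 2 := by
  obtain ⟨e, rfl⟩ : ∃ e, d = e + 1 := ⟨d - 1, by omega⟩
  have hs : ∀ n, s n = NN (e+1) n := fun n => by rw [hsdef n, sph_set_eq]
  have hα : ∀ n, αe n = (e+1) * (NN (e+1) n + NN e n) := fun n => by
    rw [hαdef n, edg_set_eq, edg_formula]
  set c1 : ℝ := 2 * 3^e * (e+1)^e with hc1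
  set c2 : ℝ := 4 * 5^e * (e+1)^e with hc2
  have hc1pos : 0 < c1 := by positivity
  have hc2pos : 0 < c2 := by positivity
  refine ⟨((e:ℝ)+1) * (c1^2 + c2) + 1, by positivity, ?_⟩
  intro n hn
  obtain ⟨D, hD1, hD2⟩ := key_nat e n hn
  set A : ℝ := (NN (e+1) n : ℝ) with hA
  set B : ℝ := (NN (e+1) (n+1) : ℝ) with hB
  set P : ℝ := (NN e n : ℝ) with hP
  set δ : ℝ := (D : ℝ) with hδ
  have hn1 : (1:ℝ) ≤ (n:ℝ) := by exact_mod_cast hn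
  have hnpos : (0:ℝ) < (n:ℝ) := by linarith
  have hA1 : (1:ℝ) ≤ A := by rw [hA]; exact_mod_cast NN_pos e n
  have hApos : (0:ℝ) < A := by linarith
  have hPnn : (0:ℝ) ≤ P := by positivity
  have hδnn : (0:ℝ) ≤ δ := by positivity
  have hBeq : B = A + 2*P + δ := by
    have h1 := NN_succ_eq e n
    rw [hD1] at h1
    rw [hB, h1]
    push_cast
    ring
  have hBA : A ≤ B := by rw [hBeq]; linarith
  have hBpos : (0:ℝ) < B := by linarith
  have hAb : (n:ℝ)^e ≤ ((e:ℝ)+1)^e * A := by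
    have := L3 e n
    have h2 : ((n^e : ℕ) : ℝ) ≤ (((e+1)^e * NN (e+1) n : ℕ) : ℝ) := by exact_mod_cast this
    push_cast at h2
    exact h2
  have hPb : (n:ℝ) * P ≤ 2 * 3^e * (n:ℝ)^e := by
    have := L1 e n hn
    have h2 : ((n * NN e n : ℕ) : ℝ) ≤ ((2 * 3^e * n^e : ℕ) : ℝ) := by exact_mod_cast this
    push_cast at h2
    exact h2
  have hδb : (n:ℝ)^2 * δ ≤ 4 * 5^e * (n:ℝ)^e := by
    have h2 : ((n^2 * D : ℕ) : ℝ) ≤ ((4 * 5^e * n^e : ℕ) : ℝ) := by exact_mod_cast hD2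
    push_cast at h2
    exact h2
  have hsn : (s n : ℝ) = A := by rw [hs n]
  have hsn' : (s (n+1) : ℝ) = B := by rw [hs (n+1)]
  have hαn : (αe n : ℝ) = ((e:ℝ)+1) * (A + P) := by
    rw [hα n]
    push_cast
    ring
  rw [hsn, hsn', hαn]
  set g : ℝ := Real.sqrt (A * B) with hg
  have hgpos : 0 < g := Real.sqrt_pos.mpr (by positivity)
  have hg2 : g^2 = A * B := Real.sq_sqrt (by positivity)
  have hgA : A ≤ g := by
    rw [hg]
    have h1 : A = Real.sqrt (A * A) := (Real.sqrt_mul_self hApos.le).symm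
    nth_rewrite 1 [h1]
    exact Real.sqrt_le_sqrt (mul_le_mul_of_nonneg_left hBA hApos.le)
  have hden : (0:ℝ) < A + P + g := by linarith
  have hprod : (A + P - g) * (A + P + g) = P^2 - A*δ := by
    calc (A + P - g) * (A + P + g) = (A+P)^2 - g^2 := by ring
      _ = (A+P)^2 - A*B := by rw [hg2]
      _ = P^2 - A*δ := by rw [hBeq]; ring
  have hdiff : A + P - g = (P^2 - A*δ)/(A + P + g) := by
    rw [eq_div_iff (ne_of_gt hden)]
    exact hprod
  have hE : (((e:ℝ)+1) * (A + P)) / g - (((e:ℝ)+1)) = ((e:ℝ)+1) * (A + P - g) / g := by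
    field_simp
  have hcast : ((e + 1 : ℕ) : ℝ) = (e:ℝ) + 1 := by push_cast; ring
  rw [hcast, hE, hdiff]
  rw [abs_div, abs_mul, abs_div]
  have habs1 : |(e:ℝ)+1| = (e:ℝ)+1 := abs_of_pos (by positivity)
  have habs2 : |A + P + g| = A + P + g := abs_of_pos hden
  have habs3 : |g| = g := abs_of_pos hgpos
  rw [habs1, habs2, habs3]
  have habs4 : |P^2 - A*δ| ≤ P^2 + A*δ := by
    have := abs_sub (P^2) (A*δ)
    calc |P^2 - A*δ| ≤ |P^2| + |A*δ| := abs_sub _ _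
      _ = P^2 + A*δ := by rw [abs_of_nonneg (by positivity), abs_of_nonneg (by positivity)]
  -- main chain
  have hb1 : (n:ℝ)^2 * P^2 ≤ c1^2 * A^2 := by
    have h1 : (n:ℝ) * P ≤ c1 * A := by
      calc (n:ℝ) * P ≤ 2 * 3^e * (n:ℝ)^e := hPb
        _ ≤ 2 * 3^e * (((e:ℝ)+1)^e * A) := by
            apply mul_le_mul_of_nonneg_left hAb (by positivity)
        _ = c1 * A := by rw [hc1]; ring
    calc (n:ℝ)^2 * P^2 = ((n:ℝ) * P)^2 := by ring
      _ ≤ (c1 * A)^2 := by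
          apply pow_le_pow_left₀ (by positivity) h1
      _ = c1^2 * A^2 := by ring
  have hb2 : (n:ℝ)^2 * (A*δ) ≤ c2 * A^2 := by
    calc (n:ℝ)^2 * (A*δ) = A * ((n:ℝ)^2 * δ) := by ring
      _ ≤ A * (4 * 5^e * (n:ℝ)^e) := mul_le_mul_of_nonneg_left hδb hApos.le
      _ ≤ A * (4 * 5^e * (((e:ℝ)+1)^e * A)) := by
          apply mul_le_mul_of_nonneg_left (mul_le_mul_of_nonneg_left hAb (by positivity)) hApos.le
      _ = c2 * A^2 := by rw [hc2]; ring
  have hrw : ((e:ℝ)+1) * (|P^2 - A*δ| / (A + P + g)) / g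
      = (((e:ℝ)+1) * |P^2 - A*δ|) / ((A + P + g) * g) := by
    field_simp
  rw [hrw]
  have hstep1 : (((e:ℝ)+1) * |P^2 - A*δ|) / ((A + P + g) * g)
      ≤ (((e:ℝ)+1) * (P^2 + A*δ)) / (A * A) := by
    apply div_le_div₀ (by positivity) ?_ (by positivity) ?_
    · exact mul_le_mul_of_nonneg_left habs4 (by positivity)
    · calc A * A ≤ A * g := mul_le_mul_of_nonneg_left hgA hApos.le
        _ ≤ (A + P + g) * g := mul_le_mul_of_nonneg_right (by linarith) hgpos.le
  have hstep2 : (((e:ℝ)+1) * (P^2 + A*δ)) / (A * A)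
      ≤ (((e:ℝ)+1) * (c1^2 + c2)) / (n:ℝ)^2 := by
    rw [div_le_div_iff₀ (by positivity) (by positivity)]
    have hsum : (n:ℝ)^2*P^2 + (n:ℝ)^2*(A*δ) ≤ c1^2*A^2 + c2*A^2 := add_le_add hb1 hb2
    calc ((e:ℝ)+1)*(P^2+A*δ)*(n:ℝ)^2 = ((e:ℝ)+1)*((n:ℝ)^2*P^2 + (n:ℝ)^2*(A*δ)) := by ring
      _ ≤ ((e:ℝ)+1)*(c1^2*A^2 + c2*A^2) := mul_le_mul_of_nonneg_left hsum (by positivity)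
      _ = ((e:ℝ)+1)*(c1^2+c2)*(A*A) := by ring
  have hstep3 : (((e:ℝ)+1) * (c1^2 + c2)) / (n:ℝ)^2
      ≤ (((e:ℝ)+1) * (c1^2 + c2) + 1) / (n:ℝ)^2 := by
    apply div_le_div_of_nonneg_right ?_ (by positivity)
    linarith
  linarith
end
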